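/- Let p be a prime and M = ℤ⟨x,x⁻¹,c⟩/(c², cx+xc) with d_h(c) = −p, d_h(x) = 0. Suppose there exist ℤ-linear maps f₁,₁ : M → (ℤ/p)[x,x⁻¹] (of appropriate bidegree, so f₁,₁(c) = a·x for some a ∈ ℤ/p and f₁,₁(xⁿ) = 0) satisfying f₁,₁(x₁x₂) + f₀,₁(m₁,₂(x₁,x₂)) = f₁,₁(x₁)f₀,₁(x₂) + f₀,₁(x₁)f₁,₁(x₂) for all x₁, x₂ ∈ {x, c}, where f₀,₁(xⁿ) = xⁿ, f₀,₁(cxⁿ) = 0, m₁,₂(x,c) = x², m₁,₂(c,x) = 0. Then 2a·x² = x² in (ℤ/p)[x,x⁻¹]; in particular, if p = 2 this is a contradiction, so no such f₁,₁ exists when p = 2. -/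

import Mathlib

open LaurentPolynomial

/-- Integer powers `xⁿ` of an invertible element, written via `x` (for `n ≥ 0`) and a
chosen inverse `y` (for `n < 0`). -/
def zpow2 {A : Type} [Monoid A] (x y : A) (n : ℤ) : A :=
  if 0 ≤ n then x ^ n.toNat else y ^ (-n).toNat

theorem stmt_10 (p : ℕ) [Fact p.Prime] (M : Type) [Ring M]
    (x y c : M) (hxy : x * y = 1) (hyx : y * x = 1)
    (hc2 : c * c = 0) (hanti : c * x + x * c = 0)
    (b : Module.Basis (Bool × ℤ) ℤ M)
    (hb0 : ∀ n : ℤ, b (false, n) = zpow2 x y n)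
    (hb1 : ∀ n : ℤ, b (true, n) = c * zpow2 x y n)
    (a : ZMod p)
    (f01 f11 : M →+ LaurentPolynomial (ZMod p))
    (hf01x : ∀ n : ℤ, f01 (zpow2 x y n) = T n)
    (hf01c : ∀ n : ℤ, f01 (c * zpow2 x y n) = 0)
    (hf11x : ∀ n : ℤ, f11 (zpow2 x y n) = 0)
    (hf11c : f11 c = a • T 1)
    (m12 : M → M → M)
    (hm_xc : m12 x c = x * x) (hm_cx : m12 c x = 0)
    (hm_xx : m12 x x = 0) (hm_cc : m12 c c = 0)
    (heq : ∀ u v : M, (u = x ∨ u = c) → (v = x ∨ v = c) →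
      f11 (u * v) + f01 (m12 u v) = f11 u * f01 v + f01 u * f11 v) :
    ((2 : ZMod p) * a) • (T 2 : LaurentPolynomial (ZMod p)) = T 2 ∧ (p = 2 → False) := by
  have hz1 : zpow2 x y 1 = x := by simp [zpow2]
  have hz0 : zpow2 x y 0 = 1 := by simp [zpow2]
  have hz2 : zpow2 x y 2 = x * x := by simp [zpow2, pow_two]
  have hf11x1 : f11 x = 0 := by rw [← hz1]; exact hf11x 1
  have hf01x1 : f01 x = T 1 := by rw [← hz1]; exact hf01x 1
  have hf01c1 : f01 c = 0 := by
    have := hf01c 0; rwa [hz0, mul_one] at this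
  have hf01xx : f01 (x * x) = T 2 := by rw [← hz2]; exact hf01x 2
  have h1 := heq x c (Or.inl rfl) (Or.inr rfl)
  have h2 := heq c x (Or.inr rfl) (Or.inl rfl)
  rw [hm_xc, hf11x1, hf01c1, hf01x1, hf11c, hf01xx, zero_mul, zero_add] at h1
  rw [hm_cx, hf11c, hf01c1, hf01x1, hf11x1, mul_zero, add_zero, map_zero, add_zero] at h2
  have hcx : c * x = -(x * c) := eq_neg_of_add_eq_zero_left hanti
  rw [hcx, map_neg] at h2
  have hTT : (T 1 : LaurentPolynomial (ZMod p)) * T 1 = T 2 := by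
    rw [← T_add]; norm_num
  have key : ((2 : ZMod p) * a) • (T 2 : LaurentPolynomial (ZMod p)) = T 2 := by
    have h1' : f11 (x * c) + T 2 = a • T 2 := by
      rw [h1, mul_smul_comm, hTT]
    have h2' : -f11 (x * c) = a • T 2 := by
      rw [h2, smul_mul_assoc, hTT]
    have : T 2 = a • T 2 + a • (T 2 : LaurentPolynomial (ZMod p)) := by
      linear_combination h1' + h2'
    rw [two_mul, add_smul, ← this]
  refine ⟨key, fun hp => ?_⟩
  subst hp
  have h2a : (2 : ZMod 2) * a = 0 := by
    rw [show (2 : ZMod 2) = 0 from rfl, zero_mul]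
  rw [h2a, zero_smul] at key
  have := congrArg (fun f : LaurentPolynomial (ZMod 2) => f.coeff 2) key
  simp at this
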